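/- Let A be a bounded positive operator on H and S a closed subspace. If closure(A^{1/2}(S)) ∩ R(A^{1/2}) = A^{1/2}(S), then S + N(A) is closed in H. -/

import Mathlib

open scoped InnerProductSpace
open ContinuousLinearMap

/-- If `closure (A^{1/2} S) ∩ R(A^{1/2}) = A^{1/2} S`, then `S + N(A)` is closed in `H`.
Here `sq` denotes the positive square root `A^{1/2}` of `A`. -/
theorem sum_kernel_closed {H : Type*} [NormedAddCommGroup H]
    [InnerProductSpace ℂ H] [CompleteSpace H] (A sq : H →L[ℂ] H)
    (hA : A.IsPositive) (hsq : sq.IsPositive) (hsq2 : sq ∘L sq = A)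
    (S : Submodule ℂ H) (hS : IsClosed (S : Set H))
    (h : (S.map (sq : H →ₗ[ℂ] H)).topologicalClosure ⊓ LinearMap.range (sq : H →ₗ[ℂ] H) = S.map (sq : H →ₗ[ℂ] H)) :
    IsClosed ((S ⊔ LinearMap.ker (A : H →ₗ[ℂ] H) : Submodule ℂ H) : Set H) := by
  have hker : LinearMap.ker (A : H →ₗ[ℂ] H) = LinearMap.ker (sq : H →ₗ[ℂ] H) := by
    ext x
    simp only [LinearMap.mem_ker, ContinuousLinearMap.coe_coe]
    constructor
    · intro hx
      have h1 : ⟪sq x, sq x⟫_ℂ = 0 := by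
        rw [show ⟪sq x, sq x⟫_ℂ = ⟪x, sq (sq x)⟫_ℂ from hsq.1 x (sq x)]
        have : sq (sq x) = A x := by rw [← hsq2]; rfl
        rw [this, hx, inner_zero_right]
      exact inner_self_eq_zero.mp h1
    · intro hx
      rw [← hsq2]
      simp [ContinuousLinearMap.comp_apply, hx]
  have key : (S ⊔ LinearMap.ker (A : H →ₗ[ℂ] H) : Submodule ℂ H)
      = Submodule.comap (sq : H →ₗ[ℂ] H) ((S.map (sq : H →ₗ[ℂ] H)).topologicalClosure) := by
    apply le_antisymm
    · rw [sup_le_iff]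
      constructor
      · intro x hx
        exact Submodule.le_topologicalClosure _ (Submodule.mem_map_of_mem hx)
      · intro x hx
        rw [hker, LinearMap.mem_ker] at hx
        simp only [Submodule.mem_comap, ContinuousLinearMap.coe_coe, hx]
        exact Submodule.zero_mem _
    · intro x hx
      have hx' : sq x ∈ (S.map (sq : H →ₗ[ℂ] H)).topologicalClosure ⊓ LinearMap.range (sq : H →ₗ[ℂ] H) :=
        ⟨hx, ⟨x, rfl⟩⟩
      rw [h] at hx'
      obtain ⟨s, hs, hsx⟩ := hx'
      have hmem : x - s ∈ LinearMap.ker (A : H →ₗ[ℂ] H) := by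
        rw [hker, LinearMap.mem_ker]
        simp only [ContinuousLinearMap.coe_coe, map_sub, hsx, sub_self]
      have : x = s + (x - s) := by abel
      rw [this]
      exact Submodule.add_mem _ (Submodule.mem_sup_left hs) (Submodule.mem_sup_right hmem)
  rw [key]
  exact (S.map (sq : H →ₗ[ℂ] H)).isClosed_topologicalClosure.preimage sq.continuous
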